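/- arXiv:math/0406100 — 2 statements merged into one kernel-verified Lean document; each statement's English description precedes it below -/
import Mathlib

section
/- Let G be a group and N a normal subgroup of G such that the identity is the only nil-element of the quotient group G/N. Then every quasi-nil element of G belongs to N. -/
/-- Engel words with the convention of the paper: the commutator is
`[x, y] = x⁻¹ * y⁻¹ * x * y`, `engelWord 0 x y = x` and
`engelWord (n+1) x y = [engelWord n x y, y]`; thus for `n ≥ 1`,
`engelWord n x y` is the Engel word `e_n(x, y)`. -/
def engelWord {G : Type*} [Group G] : ℕ → G → G → G
  | 0, x, _ => x
  | n + 1, x, y => (engelWord n x y)⁻¹ * y⁻¹ * engelWord n x y * y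

/-- Iterated Engel words: `epsEngel [(n₁,a₁),…,(n_k,a_k)] y` is
`ε_{(n₁,…,n_k)}(a₁,…,a_k; y)`, defined by `ε_{(n₁)}(a₁;y) = e_{n₁}(a₁,y)` and
`ε_{(n₁,…,n_k)}(a₁,…,a_k;y) = e_{n_k}(a_k, ε_{(n₁,…,n_{k-1})}(a₁,…,a_{k-1};y))`. -/
def epsEngel {G : Type*} [Group G] (l : List (ℕ × G)) (y : G) : G :=
  l.foldl (fun z p => engelWord p.1 p.2 z) y

/-- `g` is a nil-element if for every `a` there is `n ≥ 1` with `e_n(a, g) = 1`. -/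
def IsNilElement {G : Type*} [Group G] (g : G) : Prop :=
  ∀ a : G, ∃ n, 1 ≤ n ∧ engelWord n a g = 1

/-- A group is locally nilpotent if every finitely generated subgroup is nilpotent. -/
def LocallyNilpotent (G : Type*) [Group G] : Prop :=
  ∀ H : Subgroup G, H.FG → Group.IsNilpotent H

/-- `g` is quasi-nil of order ≤ `k`: there are functions `ν i : G^(i+1) → ℕ` (with values ≥ 1,
`ν i` depending only on `a₁,…,a_{i+1}` and `g`) such that for all `a : Fin k → G`,
`ε_{(ν₁(a₁),…,ν_k(a₁,…,a_k))}(a₁,…,a_k; g) = 1`. -/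
def IsQuasiNilOfOrder {G : Type*} [Group G] (k : ℕ) (g : G) : Prop :=
  ∃ ν : ∀ i : Fin k, (Fin ((i : ℕ) + 1) → G) → ℕ,
    (∀ i f, 1 ≤ ν i f) ∧
    ∀ a : Fin k → G,
      epsEngel (List.ofFn fun i : Fin k =>
        (ν i fun j => a (Fin.castLE i.isLt j), a i)) g = 1

/-- `g` is quasi-nil if it is quasi-nil of order ≤ `k` for some `k ≥ 1`. -/
def IsQuasiNil {G : Type*} [Group G] (g : G) : Prop :=
  ∃ k, 1 ≤ k ∧ IsQuasiNilOfOrder k g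

/-- `g` maps to a nil-element of the quotient `G ⧸ N` (for `N` normal). -/
def IsNilElementQuot {G : Type*} [Group G] (N : Subgroup G) (hN : N.Normal) (g : G) : Prop :=
  @IsNilElement (G ⧸ N) (@QuotientGroup.Quotient.group G _ N hN) (QuotientGroup.mk g)

lemma map_engelWord {G H : Type*} [Group G] [Group H] (φ : G →* H) :
    ∀ (n : ℕ) (x y : G), φ (engelWord n x y) = engelWord n (φ x) (φ y) := by
  intro n
  induction n with
  | zero => intro x y; rfl
  | succ n ih => intro x y; simp [engelWord, ih]

lemma castLE_cons {k : ℕ} {G : Type*} (a : G) (b : Fin k → G) (i : Fin k) :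
    (fun j : Fin ((i.succ : ℕ) + 1) => (Fin.cons a b : Fin (k + 1) → G) (Fin.castLE i.succ.isLt j)) =
      Fin.cons (α := fun _ => G) a (fun j : Fin ((i : ℕ) + 1) => b (Fin.castLE i.isLt j)) := by
  funext j
  refine Fin.cases rfl (fun j' => ?_) j
  have h2 : Fin.castLE i.succ.isLt j'.succ = Fin.succ (Fin.castLE i.isLt j') := by
    ext; simp
  rw [h2]
  simp only [Fin.cons_succ]

/-- if the identity is the only nil-element of `G/N`, then every
quasi-nil element of `G` lies in `N`. -/
theorem quasiNil_mem_of_quotient_nilFree {G : Type*} [Group G] (N : Subgroup G)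
    [N.Normal] (h : ∀ x : G ⧸ N, IsNilElement x → x = 1)
    (g : G) (hg : IsQuasiNil g) : g ∈ N := by
  obtain ⟨k, -, hk⟩ := hg
  suffices key : ∀ (k : ℕ) (g : G), IsQuasiNilOfOrder k g → g ∈ N from key k g hk
  clear hk g k
  intro k
  induction k with
  | zero =>
    rintro g ⟨ν, -, h1⟩
    have h2 : g = 1 := by simpa [epsEngel] using h1 (fun i => i.elim0)
    exact h2 ▸ N.one_mem
  | succ k ih =>
    rintro g ⟨ν, hν1, hν⟩
    have hz : ∀ a : G, engelWord (ν 0 fun _ => a) a g ∈ N := by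
      intro a
      apply ih
      refine ⟨fun i f => ν i.succ (Fin.cons a f), fun i f => hν1 _ _, ?_⟩
      intro b
      have H := hν (Fin.cons a b)
      rw [List.ofFn_succ] at H
      simp only [Fin.cons_zero, Fin.cons_succ, castLE_cons] at H
      have e0 : ∀ j, (Fin.cons a b : Fin (k+1) → G) (Fin.castLE (0 : Fin (k+1)).isLt j) = a := by
        intro j
        have hj : Fin.castLE (0 : Fin (k+1)).isLt j = 0 := by
          ext
          have := j.isLt
          simp only [Fin.val_zero] at this ⊢
          change (j : ℕ) = _
          omega
        rw [hj, Fin.cons_zero]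
      simp only [e0] at H
      exact H
    have hmk : IsNilElement ((g : G ⧸ N)) := by
      intro x
      obtain ⟨a, rfl⟩ := QuotientGroup.mk_surjective x
      refine ⟨ν 0 (fun _ => a), hν1 _ _, ?_⟩
      have := hz a
      rw [← QuotientGroup.eq_one_iff] at this
      calc engelWord (ν 0 fun _ => a) (↑a) (↑g)
          = ((engelWord (ν 0 fun _ => a) a g : G) : G ⧸ N) :=
            (map_engelWord (QuotientGroup.mk' N) _ a g).symm
        _ = 1 := this
    have := h _ hmk
    rwa [QuotientGroup.eq_one_iff] at this
end

section
/- Let G be a group with a chain of normal subgroups 1 = R_0 ≤ R_1 ≤ … ≤ R_k, each R_i normal in G, such that for every i = 1,…,k the image of R_i in G/R_{i-1} is exactly the set of nil-elements of G/R_{i-1}, and such that the identity is the only nil-element of G/R_k. Then R_k is exactly the set of quasi-nil elements of G. -/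
theorem epsEngel_concat {G : Type*} [Group G] (l : List (ℕ × G)) (p : ℕ × G) (y : G) :
    epsEngel (l ++ [p]) y = engelWord p.1 p.2 (epsEngel l y) := by
  simp [epsEngel, List.foldl_append]

theorem mk_engelWord {G : Type*} [Group G] (N : Subgroup G) [N.Normal] (n : ℕ) (x y : G) :
    ((engelWord n x y : G) : G ⧸ N) = engelWord n (x : G ⧸ N) (y : G ⧸ N) := by
  induction n with
  | zero => rfl
  | succ n ih => simp [engelWord, ← ih]

def engelList {G : Type*} [Group G] (pick : ℕ → G → G → ℕ) (g : G) (f : ℕ → G) :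
    ℕ → List (ℕ × G)
  | 0 => []
  | i + 1 => engelList pick g f i ++
      [(pick i (epsEngel (engelList pick g f i) g) (f i), f i)]

theorem engelList_congr {G : Type*} [Group G] (pick : ℕ → G → G → ℕ) (g : G)
    {f f' : ℕ → G} : ∀ i : ℕ, (∀ t, t < i → f t = f' t) →
      engelList pick g f i = engelList pick g f' i
  | 0, _ => rfl
  | i + 1, h => by
    have hi := engelList_congr pick g i (fun t ht => h t (Nat.lt_succ_of_lt ht))
    simp [engelList, hi, h i (Nat.lt_succ_self i)]

/-- given a chain of normal subgroups `1 = R₀ ≤ R₁ ≤ … ≤ R_k` of `G`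
such that the image of `R_i` in `G/R_{i-1}` is exactly the set of nil-elements of
`G/R_{i-1}`, and the identity is the only nil-element of `G/R_k`, the subgroup `R_k`
is exactly the set of quasi-nil elements of `G`. -/
theorem radical_eq_quasiNil_set {G : Type*} [Group G] (k : ℕ) (hk : 1 ≤ k)
    (R : Fin (k + 1) → Subgroup G) (hbot : R 0 = ⊥)
    (hnorm : ∀ i, (R i).Normal)
    (hmono : ∀ i : Fin k, R i.castSucc ≤ R i.succ)
    (hnil : ∀ i : Fin k, ∀ g : G,
      IsNilElementQuot (R i.castSucc) (hnorm i.castSucc) g ↔ g ∈ R i.succ)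
    (htopnil : ∀ g : G, IsNilElementQuot (R (Fin.last k)) (hnorm (Fin.last k)) g →
      g ∈ R (Fin.last k)) :
    ∀ g : G, g ∈ R (Fin.last k) ↔ IsQuasiNil g := by
  classical
  intro g
  constructor
  · -- forward direction
    intro hg
    have hex : ∀ (j : ℕ) (z a : G), ∃ n, 1 ≤ n ∧
        ∀ hj : j < k, z ∈ R (Fin.succ ⟨j, hj⟩) →
          engelWord n a z ∈ R (Fin.castSucc ⟨j, hj⟩) := by
      intro j z a
      by_cases hj : j < k
      · by_cases hz : z ∈ R (Fin.succ ⟨j, hj⟩)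
        · haveI := hnorm (Fin.castSucc (⟨j, hj⟩ : Fin k))
          have hnz := (hnil ⟨j, hj⟩ z).2 hz
          obtain ⟨n, hn1, hn⟩ := hnz (QuotientGroup.mk a)
          refine ⟨n, hn1, fun hj' hz' => ?_⟩
          have hone : ((engelWord n a z : G) : G ⧸ R (Fin.castSucc (⟨j, hj⟩ : Fin k))) = 1 := by
            rw [mk_engelWord]; exact hn
          exact (QuotientGroup.eq_one_iff _).1 hone
        · exact ⟨1, le_refl 1, fun hj' hz' => absurd hz' hz⟩
      · exact ⟨1, le_refl 1, fun hj' => absurd hj' hj⟩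
    choose pick hpick1 hpick2 using hex
    set pk : ℕ → G → G → ℕ := fun i => pick (k - 1 - i) with hpk
    have key : ∀ (f : ℕ → G) (i : ℕ), i ≤ k →
        ∀ (h2 : k - i < k + 1), epsEngel (engelList pk g f i) g ∈ R ⟨k - i, h2⟩ := by
      intro f i
      induction i with
      | zero => intro _ _; exact hg
      | succ i ih =>
        intro hi h2
        have hik : i < k := hi
        have hz := ih (Nat.le_of_lt hik) (by omega)
        rw [engelList, epsEngel_concat]
        have hlev : k - 1 - i < k := by omega
        have e1 : R (Fin.succ (⟨k - 1 - i, hlev⟩ : Fin k)) = R ⟨k - i, by omega⟩ := by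
          congr 1
          apply Fin.ext
          simp
          omega
        have e2 : R (Fin.castSucc (⟨k - 1 - i, hlev⟩ : Fin k)) = R ⟨k - (i+1), h2⟩ := by
          congr 1
          apply Fin.ext
          simp
          omega
        have hmem := hpick2 (k - 1 - i) (epsEngel (engelList pk g f i) g) (f i) hlev
          (e1 ▸ hz)
        exact e2 ▸ hmem
    set ν : ∀ i : Fin k, (Fin ((i : ℕ) + 1) → G) → ℕ := fun i f =>
      pk (i : ℕ) (epsEngel (engelList pk g
        (fun t => if h : t < (i : ℕ) + 1 then f ⟨t, h⟩ else 1) (i : ℕ)) g)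
        (f ⟨(i : ℕ), Nat.lt_succ_self _⟩) with hν
    refine ⟨k, hk, ν, fun i f => by rw [hν]; exact hpick1 _ _ _, ?_⟩
    intro a
    set a' : ℕ → G := fun t => if h : t < k then a ⟨t, h⟩ else 1 with ha'
    have main : ∀ (i : ℕ) (hi : i ≤ k),
        List.ofFn (fun j : Fin i =>
          (ν (Fin.castLE hi j) (fun t => a' (t : ℕ)), a' (j : ℕ)))
          = engelList pk g a' i := by
      intro i
      induction i with
      | zero => intro _; rfl
      | succ i ih =>
        intro hi
        have hik : i < k := hi
        rw [List.ofFn_succ', List.concat_eq_append, engelList]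
        congr 1
        · exact ih (Nat.le_of_succ_le hi)
        · have h1 : engelList pk g
              (fun t => if h : t < i + 1 then a' t else 1) i = engelList pk g a' i :=
            engelList_congr _ _ i (fun t ht => by rw [dif_pos (by omega)])
          simp only [hν, Fin.coe_castLE, Fin.val_last]
          rw [h1]
    have hfin : (List.ofFn fun i : Fin k =>
        (ν i fun j => a (Fin.castLE i.isLt j), a i)) = engelList pk g a' k := by
      rw [← main k (le_refl k)]
      apply congrArg
      funext i
      have harg : (fun j : Fin ((i : ℕ) + 1) => a (Fin.castLE i.isLt j))
          = (fun t : Fin ((i : ℕ) + 1) => a' (t : ℕ)) := by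
        funext t
        simp only [ha']
        rw [dif_pos (lt_of_lt_of_le t.isLt i.isLt)]
        rfl
      have hval : a i = a' (i : ℕ) := by
        simp only [ha']; rw [dif_pos i.isLt]
      rw [harg, hval]
      rfl
    rw [hfin]
    have hmem := key a' k (le_refl k) (by omega)
    have e0 : R (⟨k - k, by omega⟩ : Fin (k+1)) = R 0 := by
      congr 1
      apply Fin.ext
      simp
    rw [e0, hbot, Subgroup.mem_bot] at hmem
    exact hmem
  · -- reverse direction
    rintro ⟨m, hm, ν, hν1, hν⟩
    by_contra hg
    haveI := hnorm (Fin.last k)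
    have step : ∀ z : G, z ∉ R (Fin.last k) → ∃ a : G, ∀ n, 1 ≤ n →
        engelWord n a z ∉ R (Fin.last k) := by
      intro z hz
      have hz' : ¬ IsNilElementQuot (R (Fin.last k)) (hnorm (Fin.last k)) z :=
        fun h => hz (htopnil z h)
      unfold IsNilElementQuot IsNilElement at hz'
      push_neg at hz'
      obtain ⟨abar, habar⟩ := hz'
      obtain ⟨a, rfl⟩ := QuotientGroup.mk_surjective abar
      refine ⟨a, fun n hn hmem => ?_⟩
      exact habar n hn (by rw [← mk_engelWord]; exact (QuotientGroup.eq_one_iff _).2 hmem)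
    have main : ∀ (i : ℕ) (hi : i ≤ m), ∃ b : ℕ → G,
        epsEngel (List.ofFn (fun j : Fin i =>
          (ν (Fin.castLE hi j) (fun t => b t), b j))) g ∉ R (Fin.last k) := by
      intro i
      induction i with
      | zero => intro _; exact ⟨fun _ => 1, by simpa [epsEngel] using hg⟩
      | succ i ih =>
        intro hi
        obtain ⟨b, hb⟩ := ih (Nat.le_of_succ_le hi)
        obtain ⟨a, ha⟩ := step _ hb
        set b' : ℕ → G := fun t => if t < i then b t else a with hb'
        refine ⟨b', ?_⟩
        rw [List.ofFn_succ', List.concat_eq_append, epsEngel_concat]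
        dsimp only
        have hhead : (List.ofFn fun j : Fin i =>
            (ν (Fin.castLE hi (Fin.castSucc j)) (fun t => b' t), b' ((Fin.castSucc j : Fin (i+1)) : ℕ)))
            = List.ofFn (fun j : Fin i =>
            (ν (Fin.castLE (Nat.le_of_succ_le hi) j) (fun t => b t), b j)) := by
          apply congrArg
          funext j
          have h1 : ∀ t : Fin ((j : ℕ) + 1), b' (t : ℕ) = b (t : ℕ) := by
            intro t
            simp only [hb']
            rw [if_pos (by omega : (t : ℕ) < i)]
          congr 1
          · exact congrArg _ (funext h1)
          · simp only [hb', Fin.coe_castSucc]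
            rw [if_pos j.isLt]
        have hlast : b' ((Fin.last i : Fin (i+1)) : ℕ) = a := by
          simp only [hb', Fin.val_last]
          rw [if_neg (lt_irrefl i)]
        rw [hhead, hlast]
        exact ha _ (hν1 _ _)
    obtain ⟨b, hb⟩ := main m (le_refl m)
    refine hb ?_
    have h1 : epsEngel (List.ofFn (fun j : Fin m =>
        (ν (Fin.castLE (le_refl m) j) (fun t => b t), b j))) g = 1 :=
      hν (fun j => b j)
    rw [h1]
    exact one_mem _
end
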